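/- arXiv:math/0202305 — 3 statements merged into one kernel-verified Lean document; each statement's English description precedes it below -/
import Mathlib

section
/- Let E be a Banach space. If every bounded linear operator on E** is the adjoint of a bounded linear operator on E*, then E is reflexive. -/
noncomputable section

/-- A normed space is reflexive if the canonical embedding into its double dual
is surjective (it is always an isometry). -/
def IsReflexiveSpace (𝕜 E : Type*) [NontriviallyNormedField 𝕜] [NormedAddCommGroup E]
    [NormedSpace 𝕜 E] : Prop :=
  Function.Surjective (NormedSpace.inclusionInDoubleDual 𝕜 E)
/-- The Banach space adjoint of a bounded linear operator. -/
def dualTrans {𝕜 E F : Type*} [NontriviallyNormedField 𝕜] [SeminormedAddCommGroup E]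
    [NormedSpace 𝕜 E] [SeminormedAddCommGroup F] [NormedSpace 𝕜 F] (S : E →L[𝕜] F) :
    StrongDual 𝕜 F →L[𝕜] StrongDual 𝕜 E :=
  (ContinuousLinearMap.compL 𝕜 E F 𝕜).flip S

/-- The double (bidual) adjoint of a bounded linear operator. -/
def doubleTrans {𝕜 E F : Type*} [NontriviallyNormedField 𝕜] [SeminormedAddCommGroup E]
    [NormedSpace 𝕜 E] [SeminormedAddCommGroup F] [NormedSpace 𝕜 F] (S : E →L[𝕜] F) :
    StrongDual 𝕜 (StrongDual 𝕜 E) →L[𝕜] StrongDual 𝕜 (StrongDual 𝕜 F) :=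
  dualTrans (dualTrans S)

open NormedSpace

/-- Let `E` be a Banach space. If every bounded linear operator on `E**` is
the adjoint of a bounded linear operator on `E*`, then `E` is reflexive. -/
theorem reflexive_of_every_operator_on_bidual_is_adjoint
    (E : Type*) [NormedAddCommGroup E] [NormedSpace ℂ E] [CompleteSpace E]
    (h : ∀ S : StrongDual ℂ (StrongDual ℂ E) →L[ℂ] StrongDual ℂ (StrongDual ℂ E),
      ∃ R : StrongDual ℂ E →L[ℂ] StrongDual ℂ E, S = dualTrans R) :
    IsReflexiveSpace ℂ E := by
  by_contra hsurj
  rw [IsReflexiveSpace, Function.Surjective] at hsurj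
  push_neg at hsurj
  obtain ⟨Φ₀, hΦ₀⟩ := hsurj
  set J := inclusionInDoubleDual ℂ E with hJ
  set p : Submodule ℂ (StrongDual ℂ (StrongDual ℂ E)) := LinearMap.range J.toLinearMap with hp
  have hclosed : IsClosed (p : Set (StrongDual ℂ (StrongDual ℂ E))) := by
    have : (p : Set (StrongDual ℂ (StrongDual ℂ E))) = Set.range (inclusionInDoubleDualLi ℂ (E := E)) := by
      ext y
      constructor
      · rintro ⟨x, rfl⟩; exact ⟨x, rfl⟩
      · rintro ⟨x, rfl⟩; exact ⟨x, rfl⟩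
    rw [this]
    exact (inclusionInDoubleDualLi ℂ (E := E)).isometry.isUniformInducing.isComplete_range.isClosed
  haveI := hclosed
  letI : NormedAddCommGroup (StrongDual ℂ (StrongDual ℂ E)) := inferInstance
  have hmk : (Submodule.Quotient.mk Φ₀ : (StrongDual ℂ (StrongDual ℂ E)) ⧸ p) ≠ 0 := by
    simpa [Submodule.Quotient.mk_eq_zero, hp, LinearMap.mem_range] using fun x hx => hΦ₀ x hx
  obtain ⟨g, hg1, hg2⟩ := exists_dual_vector ℂ (Submodule.Quotient.mk Φ₀ : (StrongDual ℂ (StrongDual ℂ E)) ⧸ p) (norm_ne_zero_iff.2 hmk)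
  let mkCLM : StrongDual ℂ (StrongDual ℂ E) →L[ℂ] (StrongDual ℂ (StrongDual ℂ E)) ⧸ p :=
    ⟨p.mkQ, continuous_quot_mk⟩
  let θ : StrongDual ℂ (StrongDual ℂ (StrongDual ℂ E)) := g.comp mkCLM
  have hθJ : ∀ x : E, θ (J x) = 0 := by
    intro x
    have : (J x : StrongDual ℂ (StrongDual ℂ E)) ∈ p := ⟨x, rfl⟩
    simp only [θ, ContinuousLinearMap.comp_apply]
    have : mkCLM (J x) = 0 := (Submodule.Quotient.mk_eq_zero p).2 this
    rw [this, map_zero]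
  have hθΦ₀ : θ Φ₀ ≠ 0 := by
    have : θ Φ₀ = ‖(Submodule.Quotient.mk Φ₀ : (StrongDual ℂ (StrongDual ℂ E)) ⧸ p)‖ := hg2
    rw [this]
    exact_mod_cast norm_ne_zero_iff.2 hmk
  obtain ⟨R, hR⟩ := h (θ.smulRight Φ₀)
  have hR0 : ∀ f : StrongDual ℂ E, R f = 0 := by
    intro f
    ext x
    have h1 : (θ.smulRight Φ₀) (J x) = (dualTrans R) (J x) := by rw [hR]
    have h2 : (θ.smulRight Φ₀) (J x) f = (dualTrans R) (J x) f := by rw [h1]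
    have h3 : (θ.smulRight Φ₀) (J x) f = 0 := by
      simp [ContinuousLinearMap.smulRight_apply, hθJ x]
    have h4 : (dualTrans R) (J x) f = (R f) x := rfl
    rw [h3, h4] at h2
    simpa using h2.symm
  have hzero : Φ₀ = 0 := by
    ext f
    have h1 : (θ.smulRight Φ₀) Φ₀ f = (dualTrans R) Φ₀ f := by rw [hR]
    have h2 : (dualTrans R) Φ₀ f = Φ₀ (R f) := rfl
    rw [h2, hR0 f, map_zero] at h1
    have h3 : (θ.smulRight Φ₀) Φ₀ f = θ Φ₀ * Φ₀ f := by
      simp [ContinuousLinearMap.smulRight_apply, smul_eq_mul]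
    rw [h3] at h1
    have := mul_eq_zero.1 h1
    rcases this with h | h
    · exact absurd h hθΦ₀
    · simpa using h
  exact hΦ₀ 0 (by simp [hzero])
end
end

section
/- Let E be a normed space, and let T be a bounded finite rank operator on E. Then there is a bounded finite rank projection P on E such that PT = TP = T. -/
noncomputable section

/-- A bounded operator has finite rank if its range is finite-dimensional. -/
def IsFiniteRankOp {𝕜 E F : Type*} [NontriviallyNormedField 𝕜] [NormedAddCommGroup E]
    [NormedSpace 𝕜 E] [NormedAddCommGroup F] [NormedSpace 𝕜 F] (T : E →L[𝕜] F) : Prop :=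
  FiniteDimensional 𝕜 (LinearMap.range (T : E →ₗ[𝕜] F))

/-- Let `E` be a normed space and let `T` be a bounded finite rank operator
on `E`. Then there is a bounded finite rank projection `P` on `E` with `PT = TP = T`. -/
theorem exists_finiteRank_projection_of_finiteRank
    (E : Type*) [NormedAddCommGroup E] [NormedSpace ℂ E]
    (T : E →L[ℂ] E) (hT : IsFiniteRankOp T) :
    ∃ P : E →L[ℂ] E, IsFiniteRankOp P ∧ P * P = P ∧ P * T = T ∧ T * P = T := by
  haveI : FiniteDimensional ℂ (LinearMap.range (T : E →ₗ[ℂ] E)) := hT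
  haveI : FiniteDimensional ℂ T.range := hT
  -- A bounded projection `f1` onto `ker T`
  obtain ⟨f1, hf1⟩ := T.ker_closedComplemented_of_finiteDimensional_range
  -- `R` is the complementary projection, with `ker R = ker T`
  set R : E →L[ℂ] E := ContinuousLinearMap.id ℂ E - (T.ker).subtypeL.comp f1 with hRdef
  have hR : ∀ x : E, R x = x - f1 x := fun x => rfl
  have hTR : ∀ x : E, T (R x) = T x := by
    intro x
    have : (f1 x : E) ∈ T.ker := (f1 x).2
    simp [hR, map_sub, LinearMap.mem_ker.mp this]
  have hRker : ∀ x : E, T x = 0 → R x = 0 := by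
    intro x hx
    have hxk : x ∈ T.ker := hx
    have h := congrArg Subtype.val (hf1 ⟨x, hxk⟩)
    rw [hR, show ((f1 x : T.ker) : E) = x from h, sub_self]
  have hRidem : ∀ x : E, R (R x) = R x := by
    intro x
    have : T (R x - x) = 0 := by rw [map_sub, hTR, sub_self]
    have h2 : R (R x - x) = 0 := hRker _ this
    rw [map_sub] at h2
    exact sub_eq_zero.mp h2
  -- range R is finite dimensional: T is injective on range R
  haveI hRfin : FiniteDimensional ℂ (LinearMap.range (R : E →ₗ[ℂ] E)) := by
    have hmap : ∀ x ∈ LinearMap.range (R : E →ₗ[ℂ] E),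
        (T : E →ₗ[ℂ] E) x ∈ LinearMap.range (T : E →ₗ[ℂ] E) := fun x _ =>
      LinearMap.mem_range_self _ x
    refine FiniteDimensional.of_injective ((T : E →ₗ[ℂ] E).restrict hmap) ?_
    intro ⟨x, hx⟩ ⟨y, hy⟩ hxy
    obtain ⟨a, ha⟩ := hx
    obtain ⟨b, hb⟩ := hy
    have hT0 : T (x - y) = 0 := by
      have := congrArg Subtype.val hxy
      simpa [LinearMap.restrict_apply, map_sub, sub_eq_zero] using this
    have hR0 : R (x - y) = 0 := hRker _ hT0
    have ha' : R a = x := ha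
    have hb' : R b = y := hb
    have : R x = x := by rw [← ha', hRidem, ha']
    have hy' : R y = y := by rw [← hb', hRidem, hb']
    rw [map_sub, this, hy'] at hR0
    exact Subtype.ext (sub_eq_zero.mp hR0)
  -- `G` is a finite dimensional subspace containing ranges of `T` and `R`
  set G : Submodule ℂ E := LinearMap.range (T : E →ₗ[ℂ] E) ⊔ LinearMap.range (R : E →ₗ[ℂ] E)
    with hGdef
  haveI : FiniteDimensional ℂ G := Submodule.finiteDimensional_sup _ _
  -- A bounded projection `Q` onto `G`, fixing `G` pointwise
  obtain ⟨f2, hf2⟩ := Submodule.ClosedComplemented.of_finiteDimensional G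
  set Q : E →L[ℂ] E := G.subtypeL.comp f2 with hQdef
  have hQmem : ∀ x : E, Q x ∈ G := fun x => (f2 x).2
  have hQfix : ∀ x ∈ G, Q x = x := by
    intro x hx
    have := hf2 ⟨x, hx⟩
    simpa [hQdef] using congrArg Subtype.val this
  have hTmemG : ∀ x : E, T x ∈ G := fun x =>
    Submodule.mem_sup_left (LinearMap.mem_range_self _ x)
  have hRmemG : ∀ x : E, R x ∈ G := fun x =>
    Submodule.mem_sup_right (LinearMap.mem_range_self _ x)
  -- the projection we want
  set P : E →L[ℂ] E := R + Q - R * Q with hPdef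
  have hP : ∀ x : E, P x = R x + Q x - R (Q x) := fun x => rfl
  have hPmemG : ∀ x : E, P x ∈ G := fun x =>
    sub_mem (add_mem (hRmemG x) (hQmem x)) (hRmemG _)
  have hQP : ∀ x : E, Q (P x) = P x := fun x => hQfix _ (hPmemG x)
  have hPidem : ∀ x : E, P (P x) = P x := by
    intro x
    rw [hP (P x), hQP, hP x]
    abel
  refine ⟨P, ?_, ?_, ?_, ?_⟩
  · have hle : LinearMap.range (P : E →ₗ[ℂ] E) ≤ G := by
      rintro x ⟨y, rfl⟩
      exact hPmemG y
    exact Submodule.finiteDimensional_of_le hle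
  · ext x; exact hPidem x
  · ext x
    have hQT : Q (T x) = T x := hQfix _ (hTmemG x)
    simp only [ContinuousLinearMap.mul_apply, hP, hQT]
    abel
  · ext x
    simp only [ContinuousLinearMap.mul_apply, hP, map_sub, map_add, hTR]
    abel
end
end

section
/- Let E be a normed space, and let F be a finite-dimensional linear subspace of F(E), the bounded finite rank operators on E. Then there is a bounded finite rank projection p on E such that F ⊆ p F(E) p, i.e. every T ∈ F satisfies T = p S p for some S ∈ F(E). -/
noncomputable section

/-- Let `E` be a normed space and let `F` be a finite-dimensional linear
subspace of the bounded finite rank operators on `E`. Then there is a bounded finite rank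
projection `p` on `E` such that `F ⊆ p F(E) p`. -/
theorem exists_finiteRank_projection_of_finiteDimensional_subspace
    (E : Type*) [NormedAddCommGroup E] [NormedSpace ℂ E]
    (F : Submodule ℂ (E →L[ℂ] E)) (hfin : FiniteDimensional ℂ F)
    (hF : ∀ T ∈ F, IsFiniteRankOp T) :
    ∃ p : E →L[ℂ] E, IsFiniteRankOp p ∧ p * p = p ∧
      ∀ T ∈ F, ∃ S : E →L[ℂ] E, IsFiniteRankOp S ∧ T = p * S * p := by
  classical
  -- a basis of F
  set n := Module.finrank ℂ F with hn
  let b : Module.Basis (Fin n) ℂ F := Module.finBasis ℂ F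
  -- the common kernel K
  set K : Submodule ℂ E := ⨅ i : Fin n, LinearMap.ker ((b i : E →L[ℂ] E) : E →ₗ[ℂ] E) with hK
  have hKclosed : IsClosed (K : Set E) := by
    rw [hK, Submodule.coe_iInf]
    exact isClosed_iInter fun i => ContinuousLinearMap.isClosed_ker ((b i : E →L[ℂ] E))
  -- representation of elements of F
  have hrep : ∀ (T : E →L[ℂ] E) (hT : T ∈ F) (x : E),
      T x = ∑ i, (b.repr ⟨T, hT⟩ i) • (b i : E →L[ℂ] E) x := by
    intro T hT x
    have h1 : (⟨T, hT⟩ : F) = ∑ i, (b.repr ⟨T, hT⟩ i) • b i := (b.sum_repr ⟨T, hT⟩).symm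
    have h2 : T = ((∑ i, (b.repr ⟨T, hT⟩ i) • b i : F) : E →L[ℂ] E) := by
      rw [← h1]
    have key : ((∑ i, (b.repr ⟨T, hT⟩) i • b i : F) : E →L[ℂ] E) x
        = ∑ i, (b.repr ⟨T, hT⟩) i • (b i : E →L[ℂ] E) x := by
      have hcoe : ((∑ i, (b.repr ⟨T, hT⟩) i • b i : F) : E →L[ℂ] E)
          = ∑ i, (b.repr ⟨T, hT⟩) i • (b i : E →L[ℂ] E) := by
        have := map_sum F.subtype (fun i => (b.repr ⟨T, hT⟩) i • b i) Finset.univ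
        simpa [map_smul] using this
      rw [hcoe]
      simp
    have h3 : T x = ((⟨T, hT⟩ : F) : E →L[ℂ] E) x := rfl
    have h4 : T x = ((∑ i, (b.repr ⟨T, hT⟩) i • b i : F) : E →L[ℂ] E) x := by
      rw [h3]
      exact congrArg (fun t : F => (t : E →L[ℂ] E) x) h1
    rw [h4, key]
  -- every T ∈ F kills K
  have hKker : ∀ (T : E →L[ℂ] E), T ∈ F → ∀ x ∈ K, T x = 0 := by
    intro T hT x hx
    rw [hrep T hT x]
    have : ∀ i : Fin n, (b i : E →L[ℂ] E) x = 0 := by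
      intro i
      exact (Submodule.mem_iInf _).mp hx i
    simp [this]
  -- the joint range W
  set W : Submodule ℂ E := ⨆ i : Fin n,
    LinearMap.range (((b i : E →L[ℂ] E)) : E →ₗ[ℂ] E) with hWdef
  haveI hWfd : FiniteDimensional ℂ W := by
    haveI : ∀ i : Fin n,
        FiniteDimensional ℂ (LinearMap.range (((b i : E →L[ℂ] E)) : E →ₗ[ℂ] E)) :=
      fun i => hF (b i) (b i).2
    infer_instance
  have hrange : ∀ (T : E →L[ℂ] E), T ∈ F → ∀ x : E, T x ∈ W := by
    intro T hT x
    rw [hrep T hT x]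
    refine Submodule.sum_mem _ fun i _ => Submodule.smul_mem _ _ ?_
    exact le_iSup (fun i : Fin n =>
      LinearMap.range (((b i : E →L[ℂ] E)) : E →ₗ[ℂ] E)) i ⟨x, rfl⟩
  -- E ⧸ K is finite-dimensional
  haveI hQfd : FiniteDimensional ℂ (E ⧸ K) := by
    haveI : ∀ i : Fin n,
        FiniteDimensional ℂ (LinearMap.range (((b i : E →L[ℂ] E)) : E →ₗ[ℂ] E)) :=
      fun i => hF (b i) (b i).2
    set Φ : E →ₗ[ℂ] (Π i : Fin n, LinearMap.range (((b i : E →L[ℂ] E)) : E →ₗ[ℂ] E)) :=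
      LinearMap.pi fun i => LinearMap.rangeRestrict (((b i : E →L[ℂ] E)) : E →ₗ[ℂ] E) with hΦ
    have hker : LinearMap.ker Φ = K := by
      ext x
      simp only [hΦ, LinearMap.mem_ker, LinearMap.pi_apply, hK, Submodule.mem_iInf,
        funext_iff]
      constructor
      · intro h i
        have := h i
        have : ((b i : E →L[ℂ] E) : E →ₗ[ℂ] E).rangeRestrict x = 0 := this
        have := congrArg (Subtype.val) this
        simpa using this
      · intro h i
        ext
        simpa using h i
    have e := (Submodule.quotEquivOfEq K (LinearMap.ker Φ) hker.symm).trans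
      Φ.quotKerEquivRange
    exact e.symm.finiteDimensional
  -- a finite-dimensional complement direction M with K ⊔ M = ⊤
  obtain ⟨s, hs⟩ := K.mkQ.exists_rightInverse_of_surjective (Submodule.range_mkQ K)
  set M : Submodule ℂ E := LinearMap.range s with hM
  haveI hMfd : FiniteDimensional ℂ M := Module.Finite.range s
  have hKM : K ⊔ M = ⊤ := by
    rw [eq_top_iff]
    intro x _
    have hx1 : x - s (K.mkQ x) ∈ K := by
      have hs' : K.mkQ (s (K.mkQ x)) = K.mkQ x := by
        have := LinearMap.congr_fun hs (K.mkQ x)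
        simpa using this
      have h0 : K.mkQ (x - s (K.mkQ x)) = 0 := by rw [map_sub, hs', sub_self]
      rwa [← LinearMap.mem_ker, Submodule.ker_mkQ] at h0
    have hxeq : x = (x - s (K.mkQ x)) + s (K.mkQ x) := by abel
    rw [hxeq]
    exact Submodule.add_mem_sup hx1 ⟨K.mkQ x, rfl⟩
  -- N = W ⊔ M
  set N : Submodule ℂ E := W ⊔ M with hN
  haveI hNfd : FiniteDimensional ℂ N := inferInstance
  have hWN : W ≤ N := le_sup_left
  have hMN : M ≤ N := le_sup_right
  -- the finite-dimensional subspace Z = K ⊓ N is closed complemented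
  set Z : Submodule ℂ E := K ⊓ N with hZ
  haveI : FiniteDimensional ℂ Z := Submodule.finiteDimensional_of_le (inf_le_right : Z ≤ N)
  obtain ⟨r0, hr0⟩ := Submodule.ClosedComplemented.of_finiteDimensional Z
  set r : E →L[ℂ] E := Z.subtypeL.comp r0 with hr
  have hrZ : ∀ x : E, r x ∈ Z := fun x => (r0 x).2
  have hrfix : ∀ x ∈ Z, r x = x := by
    intro x hx
    have := hr0 ⟨x, hx⟩
    simp only [hr, ContinuousLinearMap.comp_apply, Submodule.subtypeL_apply]
    rw [this]
  -- K1
  set K1 : Submodule ℂ E := K ⊓ LinearMap.ker (r : E →ₗ[ℂ] E) with hK1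
  have hK1K : K1 ≤ K := inf_le_left
  haveI hK1closed : IsClosed (K1 : Set E) := by
    have : (K1 : Set E) = (K : Set E) ∩ (LinearMap.ker (r : E →ₗ[ℂ] E) : Set E) := rfl
    rw [this]
    exact hKclosed.inter (ContinuousLinearMap.isClosed_ker r)
  -- IsCompl K1 N
  have hcompl : IsCompl K1 N := by
    constructor
    · rw [disjoint_iff_inf_le]
      rintro x ⟨⟨hxK, hxker⟩, hxN⟩
      have hxZ : x ∈ Z := ⟨hxK, hxN⟩
      have h0 : r x = 0 := hxker
      rw [Submodule.mem_bot, ← hrfix x hxZ, h0]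
    · rw [codisjoint_iff_le_sup]
      intro x _
      obtain ⟨k, hk, m, hm, rfl⟩ := Submodule.mem_sup.mp (hKM ▸ Submodule.mem_top (x := x))
      have hrk : r k ∈ Z := hrZ k
      have h1 : k - r k ∈ K1 := by
        constructor
        · exact K.sub_mem hk hrk.1
        · show r (k - r k) = 0
          rw [map_sub, hrfix (r k) hrk, sub_self]
      have h2 : r k + m ∈ N := N.add_mem hrk.2 (hMN hm)
      have : k + m = (k - r k) + (r k + m) := by abel
      rw [this]
      exact Submodule.add_mem_sup h1 h2
  -- the quotient by K1 is a finite-dimensional Hausdorff topological vector space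
  set e : (E ⧸ K1) ≃ₗ[ℂ] N := Submodule.quotientEquivOfIsCompl K1 N hcompl with he
  haveI : FiniteDimensional ℂ (E ⧸ K1) := e.symm.finiteDimensional
  -- the projection p
  set g : (E ⧸ K1) →ₗ[ℂ] E := N.subtype.comp (e : (E ⧸ K1) →ₗ[ℂ] N) with hg
  have hgcont : Continuous g := g.continuous_of_finiteDimensional
  set pq : E →L[ℂ] (E ⧸ K1) := ⟨K1.mkQ, K1.isOpenQuotientMap_mkQ.continuous⟩ with hpq
  set p : E →L[ℂ] E := ContinuousLinearMap.comp ⟨g, hgcont⟩ pq with hp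
  have hpapply : ∀ x : E, p x = (e (Submodule.Quotient.mk x) : E) := fun x => rfl
  have hpmem : ∀ x : E, p x ∈ N := fun x => (e (Submodule.Quotient.mk x)).2
  have hpfix : ∀ x ∈ N, p x = x := by
    intro x hx
    rw [hpapply]
    have : e (Submodule.Quotient.mk ((⟨x, hx⟩ : N) : E)) = ⟨x, hx⟩ :=
      Submodule.quotientEquivOfIsCompl_apply_mk_right hcompl ⟨x, hx⟩
    rw [this]
  have hpdiff : ∀ x : E, x - p x ∈ K1 := by
    intro x
    have hmk : Submodule.Quotient.mk (p := K1) (p x) = Submodule.Quotient.mk x := by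
      rw [hpapply]
      exact Submodule.mk_quotientEquivOfIsCompl_apply hcompl (Submodule.Quotient.mk x)
    rw [← Submodule.Quotient.eq]
    exact hmk.symm
  refine ⟨p, ?_, ?_, ?_⟩
  · -- finite rank
    have hle : LinearMap.range ((p : E →L[ℂ] E) : E →ₗ[ℂ] E) ≤ N := by
      rintro y ⟨x, rfl⟩
      exact hpmem x
    exact Submodule.finiteDimensional_of_le hle
  · -- idempotent
    ext x
    exact hpfix (p x) (hpmem x)
  · -- F ⊆ p F(E) p
    intro T hT
    refine ⟨T, hF T hT, ?_⟩
    ext x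
    have h1 : T (p x) = T x := by
      have h0 : T (p x - x) = 0 :=
        hKker T hT _ (hK1K (by simpa using K1.neg_mem (hpdiff x)))
      rw [map_sub] at h0
      exact sub_eq_zero.mp h0
    have h2 : p (T x) = T x := hpfix _ (hWN (hrange T hT x))
    show T x = (p * T * p) x
    have : (p * T * p) x = p (T (p x)) := rfl
    rw [this, h1, h2]
end
end
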